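/- arXiv:0809.2402 — 4 statements merged into one kernel-verified Lean document; each statement's English description precedes it below -/
import Mathlib

section
/- Fix r ≥ 3 and μ₁, μ₂ > 1. The function Ω ↦ γ(r, Ωμ₂) - γ(r, Ω/μ₁), where γ(r,t) = (1/Γ(r))∫₀^t s^{r-1}e^{-s} ds is the regularized lower incomplete gamma function, attains its maximum over Ω > 0 uniquely at Ω* = r(log μ₂ + log μ₁)/(μ₂ - 1/μ₁). -/
open Real

theorem stmt_5 (r : ℕ) (hr : 3 ≤ r) (μ₁ μ₂ : ℝ) (h1 : 1 < μ₁) (h2 : 1 < μ₂)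
    (γ : ℝ → ℝ)
    (hγ : ∀ t : ℝ, γ t = (1 / (Nat.factorial (r - 1) : ℝ)) *
      ∫ s in (0:ℝ)..t, s ^ (r - 1) * Real.exp (-s))
    (Ωstar : ℝ) (hΩ : Ωstar = r * (Real.log μ₂ + Real.log μ₁) / (μ₂ - 1 / μ₁)) :
    ∀ Ω : ℝ, 0 < Ω → Ω ≠ Ωstar →
      γ (Ω * μ₂) - γ (Ω / μ₁) < γ (Ωstar * μ₂) - γ (Ωstar / μ₁) := by
  intro Ω hΩpos hne
  have hμ1 : (0:ℝ) < μ₁ := lt_trans one_pos h1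
  have hμ2 : (0:ℝ) < μ₂ := lt_trans one_pos h2
  have hdenom : 0 < μ₂ - 1/μ₁ := by
    have : 1/μ₁ < 1 := by rw [div_lt_one hμ1]; exact h1
    linarith
  have hlog : 0 < Real.log μ₂ + Real.log μ₁ :=
    add_pos (Real.log_pos h2) (Real.log_pos h1)
  have hrpos : (0:ℝ) < r := by
    have : 0 < r := by omega
    exact_mod_cast this
  have hΩstar_pos : 0 < Ωstar := by
    rw [hΩ]; exact div_pos (mul_pos hrpos hlog) hdenom
  set c : ℝ := 1 / (Nat.factorial (r - 1) : ℝ) with hc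
  have hcpos : 0 < c := by
    have : (0:ℝ) < (Nat.factorial (r - 1) : ℝ) := by
      exact_mod_cast Nat.factorial_pos (r - 1)
    positivity
  set f : ℝ → ℝ := fun s => s ^ (r - 1) * Real.exp (-s) with hf
  have hfc : Continuous f := by fun_prop
  set G : ℝ → ℝ := fun t => ∫ s in (0:ℝ)..t, f s with hGdef
  have hG : ∀ t : ℝ, HasDerivAt G (f t) t := by
    intro t
    exact intervalIntegral.integral_hasDerivAt_right
      (hfc.intervalIntegrable 0 t)
      (hfc.stronglyMeasurableAtFilter _ _)
      hfc.continuousAt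
  set H : ℝ → ℝ := fun y => c * G (y * μ₂) - c * G (y / μ₁) with hHdef
  have hγH : ∀ y : ℝ, γ (y * μ₂) - γ (y / μ₁) = H y := by
    intro y; simp [hHdef, hγ, hGdef, hc]
  set D : ℝ → ℝ := fun y => c * (f (y * μ₂) * μ₂) - c * (f (y / μ₁) * (1/μ₁)) with hDdef
  have hH : ∀ y : ℝ, HasDerivAt H (D y) y := by
    intro y
    have h₁ : HasDerivAt (fun x : ℝ => G (x * μ₂)) (f (y * μ₂) * μ₂) y :=
      (hG (y * μ₂)).comp y ((hasDerivAt_id y).mul_const μ₂) |>.congr_deriv (g' := f (y * μ₂) * μ₂) (by ring)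
    have h₂ : HasDerivAt (fun x : ℝ => G (x / μ₁)) (f (y / μ₁) * (1/μ₁)) y := by
      have := (hG (y / μ₁)).comp y ((hasDerivAt_id y).div_const μ₁)
      simpa [one_div, mul_comm, Function.comp_def] using this
    exact ((h₁.const_mul c).sub (h₂.const_mul c))
  -- sign of D
  have hDsign : ∀ y : ℝ, 0 < y →
      D y = c * y ^ (r - 1) * (Real.exp (r * Real.log μ₂ - y * μ₂)
        - Real.exp (-(r * Real.log μ₁) - y / μ₁)) := by
    intro y hy
    have h2r : μ₂ ^ r = Real.exp (r * Real.log μ₂) := by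
      rw [← Real.log_pow, Real.exp_log (pow_pos hμ2 r)]
    have h1r : (1/μ₁) ^ r = Real.exp (-(r * Real.log μ₁)) := by
      rw [Real.exp_neg, ← Real.log_pow, Real.exp_log (pow_pos hμ1 r), one_div, inv_pow]
    have hr1 : r - 1 + 1 = r := by omega
    have hpow2 : μ₂ ^ r = μ₂ ^ (r-1) * μ₂ := by rw [← pow_succ, hr1]
    have hpow1 : (1/μ₁:ℝ) ^ r = (1/μ₁) ^ (r-1) * (1/μ₁) := by rw [← pow_succ, hr1]
    have e1 : f (y * μ₂) * μ₂ = y ^ (r-1) * μ₂ ^ r * Real.exp (-(y * μ₂)) := by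
      simp only [hf, hpow2, mul_pow]; ring
    have e2 : f (y / μ₁) * (1/μ₁) = y ^ (r-1) * (1/μ₁) ^ r * Real.exp (-(y / μ₁)) := by
      rw [hpow1]
      simp only [hf, div_eq_mul_inv, one_div, mul_pow]; ring
    simp only [hDdef]
    rw [e1, e2, h2r, h1r,
      sub_eq_add_neg ((r:ℝ) * Real.log μ₂), Real.exp_add,
      sub_eq_add_neg (-((r:ℝ) * Real.log μ₁)), Real.exp_add]
    ring
  have hkey : ∀ y : ℝ, 0 < y →
      ((y < Ωstar → 0 < D y) ∧ (Ωstar < y → D y < 0)) := by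
    intro y hy
    have hDs := hDsign y hy
    have hΩ' : Ωstar * (μ₂ - 1/μ₁) = r * (Real.log μ₂ + Real.log μ₁) := by
      rw [hΩ, div_mul_cancel₀ _ (ne_of_gt hdenom)]
    have hcy : 0 < c * y ^ (r - 1) := by positivity
    have expand : ∀ z : ℝ, z * (μ₂ - 1/μ₁) = z * μ₂ - z / μ₁ := fun z => by ring
    constructor
    · intro hlt
      have key := mul_lt_mul_of_pos_right hlt hdenom
      rw [hΩ', expand] at key
      have : -(r * Real.log μ₁) - y / μ₁ < r * Real.log μ₂ - y * μ₂ := by linarith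
      have := Real.exp_lt_exp.mpr this
      rw [hDs]
      exact mul_pos hcy (sub_pos.mpr this)
    · intro hlt
      have key := mul_lt_mul_of_pos_right hlt hdenom
      rw [hΩ', expand] at key
      have : r * Real.log μ₂ - y * μ₂ < -(r * Real.log μ₁) - y / μ₁ := by linarith
      have := Real.exp_lt_exp.mpr this
      rw [hDs]
      exact mul_neg_of_pos_of_neg hcy (sub_neg.mpr this)
  have hHcont : Continuous H := by
    have : Differentiable ℝ H := fun y => (hH y).differentiableAt
    exact this.continuous
  rw [hγH, hγH]
  rcases lt_or_gt_of_ne hne with hlt | hgt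
  · have hmono : StrictMonoOn H (Set.Icc 0 Ωstar) := by
      apply strictMonoOn_of_deriv_pos (convex_Icc 0 Ωstar) hHcont.continuousOn
      intro x hx
      rw [interior_Icc, Set.mem_Ioo] at hx
      rw [(hH x).deriv]
      exact (hkey x hx.1).1 hx.2
    exact hmono ⟨le_of_lt hΩpos, le_of_lt hlt⟩ ⟨le_of_lt hΩstar_pos, le_refl _⟩ hlt
  · have hanti : StrictAntiOn H (Set.Ici Ωstar) := by
      apply strictAntiOn_of_deriv_neg (convex_Ici Ωstar) hHcont.continuousOn
      intro x hx
      rw [interior_Ici, Set.mem_Ioi] at hx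
      rw [(hH x).deriv]
      exact (hkey x (lt_trans hΩstar_pos hx)).2 hx
    exact hanti (le_refl Ωstar : Ωstar ∈ Set.Ici Ωstar) (le_of_lt hgt) hgt
end

section
/- For integers r ≥ 3 and n with r ≤ n ≤ (r - √r)/p - 1 where p ∈ (0,1), the inequality n^{r-1} e^{-np} ≥ (n-1)(n-2)⋯(n-r+1)(1-p)^{n-r} holds. -/
set_option maxHeartbeats 4000000
set_option maxRecDepth 100000

open Real

private lemma log_lb {x : ℝ} (h0 : 0 ≤ x) (h1 : x < 1) :
    x + x ^ 2 / 2 ≤ -Real.log (1 - x) := by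
  have h := Real.hasSum_pow_div_log_of_abs_lt_one (x := x) (by rwa [abs_of_nonneg h0])
  have h2 := sum_le_hasSum (Finset.range 2) (fun i _ => by positivity) h
  have h3 : (∑ i ∈ Finset.range 2, x ^ (i + 1) / ((i : ℝ) + 1)) = x + x ^ 2 / 2 := by
    norm_num [Finset.sum_range_succ]
  calc x + x ^ 2 / 2 = ∑ i ∈ Finset.range 2, x ^ (i + 1) / ((i : ℝ) + 1) := h3.symm
    _ ≤ -Real.log (1 - x) := by exact_mod_cast h2

private lemma log_ratio_lb {k : ℝ} (hk : 1 ≤ k) :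
    2 / (2 * k + 1) ≤ Real.log ((k + 1) / k) := by
  have hk0 : 0 < k := by linarith
  set u : ℝ := 1 / (2 * k + 1) with hu
  have hu0 : 0 < u := by positivity
  have hu1 : u < 1 := by
    rw [hu, div_lt_one (by linarith)]; linarith
  have h1 : u + u ^ 2 / 2 ≤ -Real.log (1 - u) := log_lb hu0.le hu1
  have h1u : (0 : ℝ) < 1 + u := by linarith
  have hv0 : (0 : ℝ) ≤ u / (1 + u) := by positivity
  have hv1 : u / (1 + u) < 1 := by rw [div_lt_one h1u]; linarith
  have h2 := log_lb hv0 hv1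
  have h3 : (1 : ℝ) - u / (1 + u) = 1 / (1 + u) := by field_simp; ring
  rw [h3, Real.log_div one_ne_zero (ne_of_gt h1u), Real.log_one] at h2
  have h4 : u - u ^ 2 / 2 ≤ Real.log (1 + u) := by
    have key : u - u ^ 2 / 2 ≤ u / (1 + u) + (u / (1 + u)) ^ 2 / 2 := by
      have e2 : u / (1 + u) + (u / (1 + u)) ^ 2 / 2 = (2 * u * (1 + u) + u ^ 2) / (2 * (1 + u) ^ 2) := by
        field_simp
      rw [e2, le_div_iff₀ (by positivity)]
      nlinarith [pow_nonneg hu0.le 4]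
    linarith
  have h5 : (k + 1) / k = (1 + u) / (1 - u) := by
    rw [hu]; field_simp; ring
  rw [h5, Real.log_div (ne_of_gt h1u) (by linarith)]
  have hul : u + u ^ 2 / 2 + (u - u ^ 2 / 2) = 2 * u := by ring
  have h6 : 2 * u = 2 / (2 * k + 1) := by rw [hu]; ring
  linarith

private lemma log_le_half (z : ℝ) (hz : 1 ≤ z) : Real.log z ≤ (z ^ 2 - 1) / (2 * z) := by
  rcases eq_or_lt_of_le hz with h | h
  · rw [← h]; norm_num
  · have hz0 : 0 < z := by linarith
    have hlz : 0 < Real.log z := Real.log_pos h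
    have hs := Real.self_lt_sinh_iff.mpr hlz
    have : Real.sinh (Real.log z) = (z ^ 2 - 1) / (2 * z) := by
      rw [Real.sinh_eq, Real.exp_log hz0, Real.exp_neg, Real.exp_log hz0]
      field_simp
    linarith [this ▸ hs]

private lemma desc_bound (n : ℕ) :
    ∀ m : ℕ, m < n → (Nat.descFactorial (n - 1) m : ℝ) ≤
      (n : ℝ) ^ m * Real.exp ((((n : ℝ) - m) - 1 / 2) * Real.log ((n : ℝ) / ((n : ℝ) - m)) - m) := by
  intro m
  induction m with
  | zero =>
    intro hm
    have hn0 : (0 : ℝ) < n := by exact_mod_cast hm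
    simp only [Nat.descFactorial_zero, Nat.cast_one, pow_zero, Nat.cast_zero, sub_zero, one_mul]
    rw [div_self (ne_of_gt hn0), Real.log_one, mul_zero, Real.exp_zero]
  | succ m ih =>
    intro hm
    have hcc : ((m + 1 : ℕ) : ℝ) = (m : ℝ) + 1 := by push_cast; ring
    rw [hcc]
    have hmn : m < n := by omega
    have ihm := ih hmn
    have hN : ((m : ℝ) + 2) ≤ (n : ℝ) := by exact_mod_cast hm
    set N : ℝ := (n : ℝ) with hNdef
    set x : ℝ := N - m with hxdef
    have hx2 : 2 ≤ x := by rw [hxdef]; linarith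
    have hx1 : 0 < x - 1 := by linarith
    have hx0 : 0 < x := by linarith
    have hN0 : 0 < N := by linarith
    have hcast : ((Nat.descFactorial (n - 1) (m + 1) : ℕ) : ℝ)
        = (N - 1 - m) * (Nat.descFactorial (n - 1) m : ℝ) := by
      rw [Nat.descFactorial_succ]
      have h1 : m ≤ n - 1 := by omega
      push_cast [Nat.cast_sub h1, Nat.cast_sub (by omega : 1 ≤ n)]
      ring
    rw [hcast]
    have hexp : Real.log (x - 1) + ((x - 1 / 2) * Real.log (N / x) - m)
        ≤ Real.log N + (((x - 1) - 1 / 2) * Real.log (N / (x - 1)) - (m + 1)) := by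
      have hL := log_ratio_lb (k := x - 1) (by linarith)
      have hfix : (x - 1) + 1 = x := by ring
      rw [hfix] at hL
      rw [Real.log_div (ne_of_gt hx0) (ne_of_gt hx1)] at hL
      have hprod : 1 ≤ (x - 1 / 2) * (Real.log x - Real.log (x - 1)) := by
        have h2 : (x - 1 / 2) * (2 / (2 * (x - 1) + 1)) ≤ (x - 1 / 2) * (Real.log x - Real.log (x - 1)) :=
          mul_le_mul_of_nonneg_left hL (by linarith)
        have h3 : (x - 1 / 2) * (2 / (2 * (x - 1) + 1)) = 1 := by
          have : (2 * (x - 1) + 1) ≠ 0 := by linarith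
          field_simp
          ring
        linarith
      rw [Real.log_div (ne_of_gt hN0) (ne_of_gt hx0), Real.log_div (ne_of_gt hN0) (ne_of_gt hx1)]
      nlinarith [hprod]
    have hkey : (x - 1) * Real.exp ((x - 1 / 2) * Real.log (N / x) - m)
        ≤ N * Real.exp (((x - 1) - 1 / 2) * Real.log (N / (x - 1)) - (m + 1)) := by
      calc (x - 1) * Real.exp ((x - 1 / 2) * Real.log (N / x) - m)
          = Real.exp (Real.log (x - 1) + ((x - 1 / 2) * Real.log (N / x) - m)) := by
            rw [Real.exp_add, Real.exp_log hx1]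
        _ ≤ Real.exp (Real.log N + (((x - 1) - 1 / 2) * Real.log (N / (x - 1)) - (m + 1))) :=
            Real.exp_le_exp.mpr hexp
        _ = N * Real.exp (((x - 1) - 1 / 2) * Real.log (N / (x - 1)) - (m + 1)) := by
            rw [Real.exp_add, Real.exp_log hN0]
    have hpow : (0 : ℝ) ≤ N ^ m := by positivity
    have hx1N : x - 1 = N - ((m : ℝ) + 1) := by rw [hxdef]; ring
    calc (N - 1 - m) * (Nat.descFactorial (n - 1) m : ℝ)
        ≤ (N - 1 - m) * (N ^ m * Real.exp ((x - 1 / 2) * Real.log (N / x) - m)) := by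
          apply mul_le_mul_of_nonneg_left _ (by linarith)
          calc (Nat.descFactorial (n - 1) m : ℝ)
              ≤ N ^ m * Real.exp (((N - m) - 1 / 2) * Real.log (N / (N - m)) - m) := ihm
            _ = N ^ m * Real.exp ((x - 1 / 2) * Real.log (N / x) - m) := by rw [← hxdef]
      _ = N ^ m * ((x - 1) * Real.exp ((x - 1 / 2) * Real.log (N / x) - m)) := by
          rw [hxdef]; ring
      _ ≤ N ^ m * (N * Real.exp (((x - 1) - 1 / 2) * Real.log (N / (x - 1)) - (m + 1))) :=
          mul_le_mul_of_nonneg_left hkey hpow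
      _ = N ^ (m + 1) * Real.exp ((N - ((m : ℝ) + 1) - 1 / 2) * Real.log (N / (N - ((m : ℝ) + 1))) - ((m : ℝ) + 1)) := by
          rw [hx1N, pow_succ]; ring_nf

private lemma Apos (m u : ℝ) (hm : 0 ≤ m) (hu : 0 ≤ u) :
    0 ≤ 8 + 40*u + 82*u^2 + 88*u^3 + 52*u^4 + 16*u^5 + 2*u^6 + 24*m + 84*m*u + 125*m*u^2 + 98*m*u^3 + 43*m*u^4 + 10*m*u^5 + m*u^6 + 26*m^2 + 56*m^2*u + 52*m^2*u^2 + 22*m^2*u^3 + 4*m^2*u^4 + 12*m^3 + 12*m^3*u + 5*m^3*u^2 + 2*m^4 := by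
  have h : ∀ i j : ℕ, 0 ≤ m ^ i * u ^ j := fun i j =>
    mul_nonneg (pow_nonneg hm i) (pow_nonneg hu j)
  linarith [h 0 1, h 0 2, h 0 3, h 0 4, h 0 5, h 0 6, h 1 0, h 1 1, h 1 2, h 1 3, h 1 4,
    h 1 5, h 1 6, h 2 0, h 2 1, h 2 2, h 2 3, h 2 4, h 3 0, h 3 1, h 3 2, h 4 0]

private lemma Gpos (m u : ℝ) (hm : 0 ≤ m) (hu : 0 ≤ u) :
    0 ≤ 64*u + 528*u^2 + 1952*u^3 + 4260*u^4 + 6080*u^5 + 5932*u^6 + 4008*u^7 + 1852*u^8 + 560*u^9 + 100*u^10 + 8*u^11 + 352*m*u + 2576*m*u^2 + 8464*m*u^3 + 16464*m*u^4 + 21024*m*u^5 + 18440*m*u^6 + 11264*m*u^7 + 4736*m*u^8 + 1312*m*u^9 + 216*m*u^10 + 16*m*u^11 + 816*m^2*u + 5220*m^2*u^2 + 14960*m^2*u^3 + 25397*m^2*u^4 + 28364*m^2*u^5 + 21854*m^2*u^6 + 11832*m^2*u^7 + 4491*m^2*u^8 + 1168*m^2*u^9 + 198*m^2*u^10 + 20*m^2*u^11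 + m^2*u^12 + 1032*m^3*u + 5664*m^3*u^2 + 13800*m^3*u^3 + 19829*m^3*u^4 + 18688*m^3*u^5 + 12154*m^3*u^6 + 5604*m^3*u^7 + 1867*m^3*u^8 + 460*m^3*u^9 + 86*m^3*u^10 + 12*m^3*u^11 + m^3*u^12 + 768*m^4*u + 3528*m^4*u^2 + 7040*m^4*u^3 + 8166*m^4*u^4 + 6112*m^4*u^5 + 3098*m^4*u^6 + 1088*m^4*u^7 + 266*m^4*u^8 + 44*m^4*u^9 + 4*m^4*u^10 + 336*m^5*u + 1248*m^5*u^2 + 1920*m^5*u^3 + 1658*m^5*u^4 + 880*m^5*u^5 + 294*m^5*u^6 + 60*m^5*u^7 + 6*m^5*u^8 + 80*m^6*u + 228*m^6*u^2 + 240*m^6*u^3 + 129*m^6*u^4 + 36*m^6*u^5 + 4*m^6*u^6 + 8*m^7*u + 16*m^7*u^2 + 8*m^7*u^3 + m^7*u^4 := by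
  have h : ∀ i j : ℕ, 0 ≤ m ^ i * u ^ j := fun i j =>
    mul_nonneg (pow_nonneg hm i) (pow_nonneg hu j)
  linarith [h 0 1, h 0 2, h 0 3, h 0 4, h 0 5, h 0 6, h 0 7, h 0 8, h 0 9, h 0 10, h 0 11,
    h 1 1, h 1 2, h 1 3, h 1 4, h 1 5, h 1 6, h 1 7, h 1 8, h 1 9, h 1 10, h 1 11,
    h 2 1, h 2 2, h 2 3, h 2 4, h 2 5, h 2 6, h 2 7, h 2 8, h 2 9, h 2 10, h 2 11, h 2 12,
    h 3 1, h 3 2, h 3 3, h 3 4, h 3 5, h 3 6, h 3 7, h 3 8, h 3 9, h 3 10, h 3 11, h 3 12,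
    h 4 1, h 4 2, h 4 3, h 4 4, h 4 5, h 4 6, h 4 7, h 4 8, h 4 9, h 4 10,
    h 5 1, h 5 2, h 5 3, h 5 4, h 5 5, h 5 6, h 5 7, h 5 8,
    h 6 1, h 6 2, h 6 3, h 6 4, h 6 5, h 6 6,
    h 7 1, h 7 2, h 7 3, h 7 4]

private lemma sqrt_step (a d q wv nv : ℝ) (hd : 0 < d) (hq : 0 < q) (ha : 0 ≤ a)
    (hw : 0 < wv) (h1 : wv ^ 2 * q = nv) (h2 : nv * d ^ 2 ≤ a ^ 2 * q) : wv * d ≤ a := by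
  have h3 : (wv * d) ^ 2 * q ≤ a ^ 2 * q := by nlinarith
  have h4 : (wv * d) ^ 2 ≤ a ^ 2 := le_of_mul_le_mul_right h3 hq
  nlinarith [mul_pos hw hd]

private lemma scalar (N R S p : ℝ) (hRS : S ^ 2 = R) (hS1 : 1 ≤ S) (h3 : 3 ≤ R)
    (hNS : R ≤ N) (hp0 : 0 < p) (hp1 : p < 1) (hpn : p * (N + 1) ≤ R - S) :
    ((N - (R - 1)) - 1 / 2) * Real.log (N / (N - (R - 1))) - (R - 1)
      + (N - R) * Real.log (1 - p) ≤ -(N * p) := by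
  subst hRS
  have hS0 : 0 < S := by linarith
  have hN3 : 3 ≤ N := le_trans h3 hNS
  have hN0 : 0 < N := by linarith
  have hN1 : 0 < N + 1 := by linarith
  have hQ1 : 1 ≤ N - (S ^ 2 - 1) := by linarith
  have hQ0 : 0 < N - (S ^ 2 - 1) := by linarith
  set P : ℝ := (S ^ 2 - S) / (N + 1) with hPdef
  have hP0 : 0 ≤ P := by
    apply div_nonneg _ hN1.le
    nlinarith
  have hpP : p ≤ P := by
    rw [hPdef, le_div_iff₀ hN1]; linarith
  have hP1 : P < 1 := by
    rw [hPdef, div_lt_one hN1]; nlinarith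
  have h1P : 0 < 1 - P := by linarith
  have hNP : N * P ≤ S ^ 2 - S := by
    rw [hPdef, ← mul_div_assoc, div_le_iff₀ hN1]
    nlinarith
  have hNP1 : N * P ≤ S ^ 2 - 1 := by nlinarith
  -- step 1 : monotonicity in p
  have hl1 : Real.log (1 - p) - Real.log (1 - P) ≤ (P - p) / (1 - P) := by
    rw [← Real.log_div (by linarith) (ne_of_gt h1P)]
    have h := Real.log_le_sub_one_of_pos (show (0:ℝ) < (1 - p) / (1 - P) from div_pos (by linarith) h1P)
    have e : (1 - p) / (1 - P) - 1 = (P - p) / (1 - P) := by field_simp; ring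
    linarith
  have hstep1 : N * p + (N - S ^ 2) * Real.log (1 - p)
      ≤ N * P + (N - S ^ 2) * Real.log (1 - P) := by
    have hNS2 : 0 ≤ N - S ^ 2 := by linarith
    have h1 : (N - S ^ 2) * (Real.log (1 - p) - Real.log (1 - P))
        ≤ (N - S ^ 2) * ((P - p) / (1 - P)) := mul_le_mul_of_nonneg_left hl1 hNS2
    have h2 : (N - S ^ 2) * ((P - p) / (1 - P)) ≤ N * (P - p) := by
      rw [mul_div_assoc', div_le_iff₀ h1P]
      nlinarith [mul_nonneg (sub_nonneg.2 hpP) (sub_nonneg.2 hNP1)]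
    nlinarith [h1, h2]
  -- step 2 : the main bound at p = P
  set z : ℝ := N * (1 - P) / (N - (S ^ 2 - 1)) with hzdef
  have hz1 : 1 ≤ z := by
    rw [hzdef, le_div_iff₀ hQ0]; nlinarith
  have hz0 : 0 < z := by linarith
  have hNQ : 0 < N / (N - (S ^ 2 - 1)) := by positivity
  have hlz : Real.log z ≤ (z ^ 2 - 1) / (2 * z) := log_le_half z hz1
  have hsplit : Real.log (N / (N - (S ^ 2 - 1))) = Real.log z - Real.log (1 - P) := by
    have he : z = (N / (N - (S ^ 2 - 1))) * (1 - P) := by rw [hzdef]; ring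
    rw [he, Real.log_mul (ne_of_gt hNQ) (ne_of_gt h1P)]; ring
  set w : ℝ := Real.sqrt (N / (N - (S ^ 2 - 1))) with hwdef
  have hw0 : 0 < w := Real.sqrt_pos.mpr hNQ
  have hw2 : w ^ 2 = N / (N - (S ^ 2 - 1)) := Real.sq_sqrt hNQ.le
  have hlw : Real.log (N / (N - (S ^ 2 - 1))) = 2 * Real.log w := by
    rw [hwdef, Real.log_sqrt hNQ.le]; ring
  have hw1 : Real.log w ≤ w - 1 := Real.log_le_sub_one_of_pos hw0
  -- the algebraic endgame
  have hzQ : z = N * (N + 1 - S ^ 2 + S) / ((N - (S ^ 2 - 1)) * (N + 1)) := by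
    rw [hzdef, hPdef]; field_simp; ring
  have hD : (0:ℝ) < 2 * N * (N + 1) * (N + 1 - S ^ 2 + S) * (N - (S ^ 2 - 1)) := by
    have : 0 < N + 1 - S ^ 2 + S := by nlinarith
    positivity
  have hAp := Apos (N - S ^ 2) (S - 1) (by linarith) (by linarith)
  have hA : 0 ≤ -1*S^2 + 2*S^4 + -1*S^6 + N + -4*N*S^2 + 2*N*S^3 + 3*N*S^4 + -2*N*S^5 + 4*N^2 + 2*N^2*S + -5*N^2*S^2 + N^2*S^4 + 5*N^3 + 2*N^3*S + -3*N^3*S^2 + 2*N^4 := by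
    linarith [hAp]
  have hGp := Gpos (N - S ^ 2) (S - 1) (by linarith) (by linarith)
  have hG : N * (2 * N * (N + 1) * (N + 1 - S ^ 2 + S) * (N - (S ^ 2 - 1))) ^ 2
      ≤ (-1*S^2 + 2*S^4 + -1*S^6 + N + -4*N*S^2 + 2*N*S^3 + 3*N*S^4 + -2*N*S^5 + 4*N^2 + 2*N^2*S + -5*N^2*S^2 + N^2*S^4 + 5*N^3 + 2*N^3*S + -3*N^3*S^2 + 2*N^4) ^ 2 * (N - (S ^ 2 - 1)) := by
    linarith [hGp]
  have hid : S ^ 2 - N * P - (N - S ^ 2) * ((z ^ 2 - 1) / (2 * z))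
      = (-1*S^2 + 2*S^4 + -1*S^6 + N + -4*N*S^2 + 2*N*S^3 + 3*N*S^4 + -2*N*S^5 + 4*N^2 + 2*N^2*S + -5*N^2*S^2 + N^2*S^4 + 5*N^3 + 2*N^3*S + -3*N^3*S^2 + 2*N^4)
        / (2 * N * (N + 1) * (N + 1 - S ^ 2 + S) * (N - (S ^ 2 - 1))) := by
    rw [hzQ, hPdef]
    have h1 : (0:ℝ) < N + 1 - S ^ 2 + S := by nlinarith
    field_simp
    ring
  have hw2' : w ^ 2 * (N - (S ^ 2 - 1)) = N := by
    rw [hw2]; field_simp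
  have hwD : w * (2 * N * (N + 1) * (N + 1 - S ^ 2 + S) * (N - (S ^ 2 - 1)))
      ≤ -1*S^2 + 2*S^4 + -1*S^6 + N + -4*N*S^2 + 2*N*S^3 + 3*N*S^4 + -2*N*S^5 + 4*N^2 + 2*N^2*S + -5*N^2*S^2 + N^2*S^4 + 5*N^3 + 2*N^3*S + -3*N^3*S^2 + 2*N^4 :=
    sqrt_step _ _ _ _ _ hD hQ0 hA hw0 hw2' hG
  have hfin : N * P + (N - S ^ 2) * ((z ^ 2 - 1) / (2 * z)) + w ≤ S ^ 2 := by
    have hw' : w ≤ (-1*S^2 + 2*S^4 + -1*S^6 + N + -4*N*S^2 + 2*N*S^3 + 3*N*S^4 + -2*N*S^5 + 4*N^2 + 2*N^2*S + -5*N^2*S^2 + N^2*S^4 + 5*N^3 + 2*N^3*S + -3*N^3*S^2 + 2*N^4)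
        / (2 * N * (N + 1) * (N + 1 - S ^ 2 + S) * (N - (S ^ 2 - 1))) := by
      rw [le_div_iff₀ hD]; exact hwD
    linarith [hw', hid]
  -- combine
  have hNS2 : 0 ≤ N - S ^ 2 := by linarith
  have hmul1 : (N - S ^ 2) * Real.log z ≤ (N - S ^ 2) * ((z ^ 2 - 1) / (2 * z)) :=
    mul_le_mul_of_nonneg_left hlz hNS2
  have hmain : ((N - (S ^ 2 - 1)) - 1 / 2) * Real.log (N / (N - (S ^ 2 - 1)))
      + N * P + (N - S ^ 2) * Real.log (1 - P) ≤ S ^ 2 - 1 := by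
    have hc : ((N - (S ^ 2 - 1)) - 1 / 2) * Real.log (N / (N - (S ^ 2 - 1)))
        + N * P + (N - S ^ 2) * Real.log (1 - P)
        = (N - S ^ 2) * Real.log z + Real.log w + N * P := by
      rw [hsplit]
      have h2 : Real.log z - Real.log (1 - P) = 2 * Real.log w := by rw [← hsplit, hlw]
      linear_combination (1/2) * h2
    rw [hc]
    linarith [hmul1, hw1, hfin]
  linarith [hstep1, hmain]

theorem stmt_10 (r n : ℕ) (hr : 3 ≤ r) (p : ℝ) (hp : p ∈ Set.Ioo (0:ℝ) 1)
    (hn : r ≤ n) (hn' : (n : ℝ) ≤ ((r : ℝ) - Real.sqrt r) / p - 1) :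
    (n : ℝ) ^ (r - 1) * Real.exp (-(n * p)) ≥
      (Nat.descFactorial (n - 1) (r - 1) : ℝ) * (1 - p) ^ (n - r) := by
  obtain ⟨hp0, hp1⟩ := hp
  have hrn : (r : ℝ) ≤ (n : ℝ) := Nat.cast_le.mpr hn
  have hr3 : (3 : ℝ) ≤ (r : ℝ) := by exact_mod_cast hr
  have hS2 : (Real.sqrt r) ^ 2 = (r : ℝ) := Real.sq_sqrt (by positivity)
  have hS1 : 1 ≤ Real.sqrt r := by nlinarith [Real.sqrt_nonneg (r : ℝ)]
  have hpn : p * ((n : ℝ) + 1) ≤ (r : ℝ) - Real.sqrt r := by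
    have h2 : (n : ℝ) + 1 ≤ ((r : ℝ) - Real.sqrt r) / p := by linarith
    calc p * ((n : ℝ) + 1) ≤ p * (((r : ℝ) - Real.sqrt r) / p) :=
          mul_le_mul_of_nonneg_left h2 hp0.le
      _ = (r : ℝ) - Real.sqrt r := by field_simp
  have hd := desc_bound n (r - 1) (by omega)
  have hc1 : ((r - 1 : ℕ) : ℝ) = (r : ℝ) - 1 := by
    push_cast [Nat.cast_sub (by omega : 1 ≤ r)]; ring
  rw [hc1] at hd
  have hp1' : (0 : ℝ) < 1 - p := by linarith
  have hpow : ((1 : ℝ) - p) ^ (n - r) = Real.exp (((n : ℝ) - (r : ℝ)) * Real.log (1 - p)) := by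
    rw [← Nat.cast_sub hn, Real.exp_nat_mul, Real.exp_log hp1']
  have key := scalar (n : ℝ) (r : ℝ) (Real.sqrt r) p hS2 hS1 hr3 hrn hp0 hp1 hpn
  rw [ge_iff_le, hpow]
  calc (Nat.descFactorial (n - 1) (r - 1) : ℝ) * Real.exp (((n : ℝ) - (r : ℝ)) * Real.log (1 - p))
      ≤ ((n : ℝ) ^ (r - 1) * Real.exp ((((n : ℝ) - ((r : ℝ) - 1)) - 1 / 2) * Real.log ((n : ℝ) / ((n : ℝ) - ((r : ℝ) - 1))) - ((r : ℝ) - 1)))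
        * Real.exp (((n : ℝ) - (r : ℝ)) * Real.log (1 - p)) :=
        mul_le_mul_of_nonneg_right hd (Real.exp_pos _).le
    _ = (n : ℝ) ^ (r - 1) * Real.exp (((((n : ℝ) - ((r : ℝ) - 1)) - 1 / 2) * Real.log ((n : ℝ) / ((n : ℝ) - ((r : ℝ) - 1))) - ((r : ℝ) - 1)) + ((n : ℝ) - (r : ℝ)) * Real.log (1 - p)) := by
        rw [mul_assoc, ← Real.exp_add]
    _ ≤ (n : ℝ) ^ (r - 1) * Real.exp (-((n : ℝ) * p)) := by
        apply mul_le_mul_of_nonneg_left _ (by positivity)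
        exact Real.exp_le_exp.mpr key
end

section
/- The equation log((t + √t + 1)/(t - √t)) - (2√t + 1)/t = 0 has exactly one solution t in (1, ∞), and that solution lies in the open interval (4, 5). -/
open Real Filter Set

noncomputable def g13 (s : ℝ) : ℝ :=
  Real.log (s^2 + s + 1) - Real.log (s^2 - s) - (2*s + 1)/s^2

lemma g13_hasDerivAt {s : ℝ} (hs : 1 < s) :
    HasDerivAt g13 ((s^2 - 2*s - 2)/(s^2*(s^2+s+1)*(s^2-s))) s := by
  have hA : (0:ℝ) < s^2 + s + 1 := by nlinarith
  have hB : (0:ℝ) < s^2 - s := by nlinarith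
  have hs0 : s ≠ 0 := by intro h; rw [h] at hs; norm_num at hs
  have hp1 : HasDerivAt (fun x : ℝ => x^2 + x + 1) (2*s + 1) s := by
    have := ((hasDerivAt_pow 2 s).add (hasDerivAt_id s)).add_const 1
    simpa using this
  have hp2 : HasDerivAt (fun x : ℝ => x^2 - x) (2*s - 1) s := by
    have := (hasDerivAt_pow 2 s).sub (hasDerivAt_id s)
    exact this.congr_deriv (by norm_num)
  have h1 : HasDerivAt (fun x : ℝ => Real.log (x^2 + x + 1)) ((2*s+1)/(s^2+s+1)) s :=
    hp1.log (ne_of_gt hA)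
  have h2 : HasDerivAt (fun x : ℝ => Real.log (x^2 - x)) ((2*s-1)/(s^2-s)) s :=
    hp2.log (ne_of_gt hB)
  have hnum : HasDerivAt (fun x : ℝ => 2*x + 1) (2) s := by
    simpa using ((hasDerivAt_id s).const_mul 2).add_const 1
  have hden : HasDerivAt (fun x : ℝ => x^2) (2*s) s := by
    simpa using hasDerivAt_pow 2 s
  have h3 : HasDerivAt (fun x : ℝ => (2*x+1)/x^2)
      ((2 * s^2 - (2*s+1) * (2*s))/(s^2)^2) s :=
    hnum.div hden (pow_ne_zero 2 hs0)
  have h := (h1.sub h2).sub h3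
  refine h.congr_deriv ?_
  have h2s : s^2 ≠ 0 := pow_ne_zero 2 hs0
  have hs1' : s - 1 ≠ 0 := sub_ne_zero.2 (ne_of_gt hs)
  have hA' : s^2 + s + 1 ≠ 0 := ne_of_gt hA
  have hB' : s^2 - s ≠ 0 := ne_of_gt hB
  field_simp
  ring

lemma g13_continuousAt {s : ℝ} (hs : 1 < s) : ContinuousAt g13 s :=
  (g13_hasDerivAt hs).continuousAt

lemma sqrt3_lt : Real.sqrt 3 < 2 := by
  have : (Real.sqrt 3)^2 < 2^2 := by
    rw [Real.sq_sqrt (by norm_num : (0:ℝ) ≤ 3)]; norm_num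
  nlinarith [Real.sqrt_nonneg 3]

lemma sqrt3_ge : (6:ℝ)/5 ≤ Real.sqrt 3 := by
  have h := Real.sq_sqrt (by norm_num : (0:ℝ) ≤ 3)
  nlinarith [Real.sqrt_nonneg 3]

lemma g13_anti : StrictAntiOn g13 (Set.Ioc 1 (1 + Real.sqrt 3)) := by
  apply strictAntiOn_of_deriv_neg (convex_Ioc _ _)
  · exact fun s hs => (g13_continuousAt hs.1).continuousWithinAt
  · intro x hx
    rw [interior_Ioc] at hx
    rw [(g13_hasDerivAt hx.1).deriv]
    have hA : (0:ℝ) < x^2 + x + 1 := by nlinarith [hx.1]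
    have hB : (0:ℝ) < x^2 - x := by nlinarith [hx.1]
    have hx2 : (0:ℝ) < x^2 := by nlinarith [hx.1]
    apply div_neg_of_neg_of_pos
    · have h3 := Real.sq_sqrt (by norm_num : (0:ℝ) ≤ 3)
      have hxu := hx.2
      nlinarith [Real.sqrt_nonneg 3, hx.1]
    · exact mul_pos (mul_pos hx2 hA) hB

lemma g13_mono : StrictMonoOn g13 (Set.Ici (1 + Real.sqrt 3)) := by
  have hone : (1:ℝ) < 1 + Real.sqrt 3 := by nlinarith [sqrt3_ge]
  apply strictMonoOn_of_deriv_pos (convex_Ici _)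
  · exact fun s hs => (g13_continuousAt (lt_of_lt_of_le hone hs)).continuousWithinAt
  · intro x hx
    rw [interior_Ici] at hx
    have hx1 : 1 < x := lt_trans hone hx
    rw [(g13_hasDerivAt hx1).deriv]
    have hA : (0:ℝ) < x^2 + x + 1 := by nlinarith
    have hB : (0:ℝ) < x^2 - x := by nlinarith
    have hx2 : (0:ℝ) < x^2 := by nlinarith
    apply div_pos
    · have h3 := Real.sq_sqrt (by norm_num : (0:ℝ) ≤ 3)
      have hxl : 1 + Real.sqrt 3 < x := hx
      nlinarith [Real.sqrt_nonneg 3, sq_nonneg (x - 1 - Real.sqrt 3)]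
    · exact mul_pos (mul_pos hx2 hA) hB

lemma g13_tendsto : Tendsto g13 atTop (nhds 0) := by
  have hi : Tendsto (fun s : ℝ => s⁻¹) atTop (nhds 0) := tendsto_inv_atTop_zero
  have hratio : Tendsto (fun s : ℝ => (1 + s⁻¹ + s⁻¹*s⁻¹)/(1 - s⁻¹)) atTop
      (nhds ((1 + 0 + 0*0)/(1 - 0))) :=
    Tendsto.div ((tendsto_const_nhds.add hi).add (hi.mul hi))
      (tendsto_const_nhds.sub hi) (by norm_num)
  have hratio1 : Tendsto (fun s : ℝ => (1 + s⁻¹ + s⁻¹*s⁻¹)/(1 - s⁻¹)) atTop (nhds 1) := by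
    simpa using hratio
  have hlog : Tendsto (fun s : ℝ => Real.log ((1 + s⁻¹ + s⁻¹*s⁻¹)/(1 - s⁻¹))) atTop
      (nhds 0) := by
    have := (Real.continuousAt_log (by norm_num : (1:ℝ) ≠ 0)).tendsto.comp hratio1
    simpa [Function.comp_def] using this
  have h2 : Tendsto (fun s : ℝ => 2*s⁻¹ + s⁻¹*s⁻¹) atTop (nhds 0) := by
    have := ((hi.const_mul 2).add (hi.mul hi))
    simpa using this
  have htot := hlog.sub h2
  rw [sub_zero] at htot
  apply htot.congr'
  filter_upwards [eventually_gt_atTop (1:ℝ)] with s hs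
  have hA : (0:ℝ) < s^2 + s + 1 := by nlinarith
  have hB : (0:ℝ) < s^2 - s := by nlinarith
  have hs0 : s ≠ 0 := by positivity
  have he1 : (1 + s⁻¹ + s⁻¹*s⁻¹)/(1 - s⁻¹) = (s^2 + s + 1)/(s^2 - s) := by
    rw [div_eq_div_iff (by intro h; apply ne_of_gt hB; field_simp at h ⊢; nlinarith) (ne_of_gt hB)]
    field_simp
  have he2 : 2*s⁻¹ + s⁻¹*s⁻¹ = (2*s + 1)/s^2 := by
    field_simp
  rw [he1, he2, Real.log_div (ne_of_gt hA) (ne_of_gt hB)]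
  rfl

lemma g13_neg_of_ge {s : ℝ} (hs : 1 + Real.sqrt 3 ≤ s) : g13 s < 0 := by
  have h1 : g13 s < g13 (s + 1) :=
    g13_mono (Set.mem_Ici.2 hs) (Set.mem_Ici.2 (by linarith)) (by linarith)
  have h2 : g13 (s + 1) ≤ 0 := by
    apply ge_of_tendsto g13_tendsto
    filter_upwards [eventually_ge_atTop (s+1)] with x hx
    rcases eq_or_lt_of_le hx with h | h
    · rw [h]
    · exact le_of_lt (g13_mono (Set.mem_Ici.2 (by linarith)) (Set.mem_Ici.2 (by linarith)) h)
  linarith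

lemma g13_two_pos : 0 < g13 2 := by
  have h1 : g13 2 = Real.log (7/2) - 5/4 := by
    unfold g13
    rw [Real.log_div (by norm_num) (by norm_num)]
    norm_num
  have hexp : Real.exp 5 < (7/2:ℝ)^4 := by
    have h5 : Real.exp 5 = (Real.exp 1)^(5:ℕ) := by
      rw [← Real.exp_nat_mul]; norm_num
    have hb : (Real.exp 1)^(5:ℕ) < (2.7182818286:ℝ)^(5:ℕ) :=
      pow_lt_pow_left₀ Real.exp_one_lt_d9 (le_of_lt (Real.exp_pos 1)) (by norm_num)
    rw [h5]
    calc (Real.exp 1)^(5:ℕ) < (2.7182818286:ℝ)^(5:ℕ) := hb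
      _ < (7/2:ℝ)^4 := by norm_num
  have hlog : (5:ℝ) < Real.log ((7/2:ℝ)^4) := by
    rw [Real.lt_log_iff_exp_lt (by norm_num)]
    exact hexp
  rw [Real.log_pow] at hlog
  rw [h1]
  push_cast at hlog
  linarith

lemma g13_elevenfifths_neg : g13 (11/5) < 0 := by
  have h1 : g13 (11/5) = Real.log (67/22) - 135/121 := by
    unfold g13
    have : ((11:ℝ)/5)^2 + 11/5 + 1 = 201/25 := by norm_num
    rw [this]
    have : ((11:ℝ)/5)^2 - 11/5 = 66/25 := by norm_num
    rw [this]
    rw [show (201:ℝ)/25 = (67/22) * (66/25) by norm_num,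
      Real.log_mul (by norm_num) (by norm_num)]
    norm_num
  have hexp : ((67:ℝ)/22)^(121:ℕ) < Real.exp 135 := by
    have h5 : Real.exp 135 = (Real.exp 1)^(135:ℕ) := by
      rw [← Real.exp_nat_mul]; norm_num
    have hb : (2.7182818283:ℝ)^(135:ℕ) < (Real.exp 1)^(135:ℕ) :=
      pow_lt_pow_left₀ Real.exp_one_gt_d9 (by norm_num) (by norm_num)
    rw [h5]
    calc ((67:ℝ)/22)^(121:ℕ) < (2.7182818283:ℝ)^(135:ℕ) := by norm_num
      _ < (Real.exp 1)^(135:ℕ) := hb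
  have hlog : Real.log (((67:ℝ)/22)^(121:ℕ)) < 135 := by
    rw [Real.log_lt_iff_lt_exp (by positivity)]
    exact hexp
  rw [Real.log_pow] at hlog
  rw [h1]
  push_cast at hlog
  linarith

lemma f13_eq_g13 {t : ℝ} (ht : 1 < t) :
    Real.log ((t + Real.sqrt t + 1) / (t - Real.sqrt t)) - (2 * Real.sqrt t + 1) / t
      = g13 (Real.sqrt t) := by
  have ht0 : (0:ℝ) ≤ t := by linarith
  have hsq : (Real.sqrt t)^2 = t := Real.sq_sqrt ht0
  have hs1 : 1 < Real.sqrt t := by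
    have := Real.sqrt_lt_sqrt (by norm_num) ht
    simpa using this
  have hA : (0:ℝ) < t + Real.sqrt t + 1 := by nlinarith
  have hB : (0:ℝ) < t - Real.sqrt t := by nlinarith
  unfold g13
  rw [hsq, Real.log_div (ne_of_gt hA) (ne_of_gt hB)]

lemma g13_zeros {s : ℝ} (hs1 : 1 < s) (h0 : g13 s = 0) : 2 < s ∧ s < 11/5 := by
  have hub : s ≤ 1 + Real.sqrt 3 := by
    by_contra h
    push_neg at h
    exact absurd h0 (ne_of_lt (g13_neg_of_ge (le_of_lt h)))
  have hmem : s ∈ Set.Ioc 1 (1 + Real.sqrt 3) := ⟨hs1, hub⟩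
  have h2mem : (2:ℝ) ∈ Set.Ioc 1 (1 + Real.sqrt 3) := ⟨by norm_num, by nlinarith [sqrt3_ge]⟩
  have h11mem : (11/5:ℝ) ∈ Set.Ioc 1 (1 + Real.sqrt 3) := ⟨by norm_num, by nlinarith [sqrt3_ge]⟩
  constructor
  · by_contra h
    push_neg at h
    rcases eq_or_lt_of_le h with h' | h'
    · rw [h'] at h0; exact absurd h0 (ne_of_gt g13_two_pos)
    · have := g13_anti hmem h2mem h'
      rw [h0] at this
      exact absurd this (not_lt.2 (le_of_lt g13_two_pos))
  · by_contra h
    push_neg at h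
    rcases eq_or_lt_of_le h with h' | h'
    · rw [← h'] at h0; exact absurd h0 (ne_of_lt g13_elevenfifths_neg)
    · have := g13_anti h11mem hmem h'
      rw [h0] at this
      exact absurd this (not_lt.2 (le_of_lt g13_elevenfifths_neg))

theorem stmt_13 :
    (∃! t : ℝ, 1 < t ∧
      Real.log ((t + Real.sqrt t + 1) / (t - Real.sqrt t)) - (2 * Real.sqrt t + 1) / t = 0) ∧
    (∀ t : ℝ, 1 < t →
      Real.log ((t + Real.sqrt t + 1) / (t - Real.sqrt t)) - (2 * Real.sqrt t + 1) / t = 0 →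
      4 < t ∧ t < 5) := by
  -- existence of a zero of g13 in (2, 11/5)
  have hcont : ContinuousOn g13 (Set.Icc 2 (11/5)) :=
    fun s hs => (g13_continuousAt (by linarith [hs.1] : (1:ℝ) < s)).continuousWithinAt
  have hIVT : (0:ℝ) ∈ g13 '' Set.Ioo 2 (11/5) := by
    apply intermediate_value_Ioo' (by norm_num : (2:ℝ) ≤ 11/5) hcont
    exact ⟨g13_elevenfifths_neg, g13_two_pos⟩
  obtain ⟨s₀, hs₀mem, hs₀⟩ := hIVT
  set t₀ : ℝ := s₀^2 with ht₀def
  have hs₀pos : (0:ℝ) < s₀ := by linarith [hs₀mem.1]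
  have hsqrt_t₀ : Real.sqrt t₀ = s₀ := Real.sqrt_sq (le_of_lt hs₀pos)
  have ht₀4 : 4 < t₀ := by nlinarith [hs₀mem.1]
  have ht₀5 : t₀ < 5 := by nlinarith [hs₀mem.2, hs₀pos]
  have ht₀1 : 1 < t₀ := by linarith
  have hft₀ : Real.log ((t₀ + Real.sqrt t₀ + 1) / (t₀ - Real.sqrt t₀))
      - (2 * Real.sqrt t₀ + 1) / t₀ = 0 := by
    rw [f13_eq_g13 ht₀1, hsqrt_t₀, hs₀]
  -- every zero t satisfies 4 < t < 5 and √t is a zero of g13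
  have hzero : ∀ t : ℝ, 1 < t →
      Real.log ((t + Real.sqrt t + 1) / (t - Real.sqrt t)) - (2 * Real.sqrt t + 1) / t = 0 →
      g13 (Real.sqrt t) = 0 ∧ 2 < Real.sqrt t ∧ Real.sqrt t < 11/5 := by
    intro t ht hf
    have hg : g13 (Real.sqrt t) = 0 := by rw [← f13_eq_g13 ht]; exact hf
    have hs1 : 1 < Real.sqrt t := by
      have := Real.sqrt_lt_sqrt (by norm_num) ht
      simpa using this
    exact ⟨hg, g13_zeros hs1 hg⟩
  constructor
  · refine ⟨t₀, ⟨ht₀1, hft₀⟩, ?_⟩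
    intro y ⟨hy1, hyf⟩
    obtain ⟨hgy, hy2, hy11⟩ := hzero y hy1 hyf
    obtain ⟨hgt₀, ht₀2, ht₀11⟩ := hzero t₀ ht₀1 hft₀
    have hmemy : Real.sqrt y ∈ Set.Ioc 1 (1 + Real.sqrt 3) :=
      ⟨by linarith, by nlinarith [sqrt3_ge]⟩
    have hmemt : Real.sqrt t₀ ∈ Set.Ioc 1 (1 + Real.sqrt 3) :=
      ⟨by linarith, by nlinarith [sqrt3_ge]⟩
    have hseq : Real.sqrt y = Real.sqrt t₀ :=
      g13_anti.injOn hmemy hmemt (by rw [hgy, hgt₀])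
    have hy0 : (0:ℝ) ≤ y := by linarith
    have ht00 : (0:ℝ) ≤ t₀ := by linarith
    calc y = (Real.sqrt y)^2 := (Real.sq_sqrt hy0).symm
      _ = (Real.sqrt t₀)^2 := by rw [hseq]
      _ = t₀ := Real.sq_sqrt ht00
  · intro t ht hf
    obtain ⟨_, h2, h11⟩ := hzero t ht hf
    have ht0 : (0:ℝ) ≤ t := by linarith
    have hsq : (Real.sqrt t)^2 = t := Real.sq_sqrt ht0
    constructor
    · nlinarith
    · nlinarith [Real.sqrt_nonneg t]
end

section
/- Fix an integer r ≥ 1. The regularized incomplete beta function I_p(r, w) = (1/B(r,w)) ∫₀^p t^{r-1}(1-t)^{w-1} dt, for fixed p ∈ (0,1), is a strictly increasing function of the real parameter w > 0. -/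
open MeasureTheory intervalIntegral Set

theorem aux_ii (n : ℕ) (w : ℝ) (hw : 0 < w) :
    IntervalIntegrable (fun t : ℝ => t ^ n * (1 - t) ^ (w - 1)) volume 0 1 := by
  have h1 : IntervalIntegrable (fun t : ℝ => (1 - t) ^ (w - 1)) volume 0 1 := by
    have := ((intervalIntegral.intervalIntegrable_rpow' (a := 0) (b := 1)
      (r := w - 1) (by linarith)).comp_sub_left 1).symm
    simpa using this
  rw [intervalIntegrable_iff] at h1 ⊢
  refine h1.mono' ?_ ?_
  · apply Measurable.aestronglyMeasurable
    fun_prop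
  · rw [uIoc_of_le (by norm_num : (0:ℝ) ≤ 1)]
    filter_upwards [ae_restrict_mem measurableSet_Ioc] with t ht
    rw [Real.norm_eq_abs, abs_mul]
    have h0 : (0:ℝ) ≤ 1 - t := by linarith [ht.2]
    have h2 : |t ^ n| ≤ 1 := by
      rw [abs_pow]
      refine pow_le_one₀ (abs_nonneg t) ?_
      rw [abs_le]; constructor <;> [linarith [ht.1]; exact ht.2]
    have h3 : |(1 - t) ^ (w - 1)| = (1 - t) ^ (w - 1) := abs_of_nonneg (Real.rpow_nonneg h0 _)
    nlinarith [abs_nonneg ((1-t)^(w-1)), abs_nonneg (t^n)]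

theorem aux_beta (n : ℕ) (w : ℝ) (hw : 0 < w) :
    Real.Gamma (n + 1) * Real.Gamma w
      = Real.Gamma ((n : ℝ) + 1 + w) * ∫ t in (0:ℝ)..1, t ^ n * (1 - t) ^ (w - 1) := by
  have hc := Complex.Gamma_mul_Gamma_eq_betaIntegral
    (s := ((n : ℝ) + 1 : ℝ)) (t := (w : ℝ)) (by simp; positivity) (by simpa using hw)
  rw [Complex.betaIntegral] at hc
  have hint : (∫ x in (0:ℝ)..1, (x : ℂ) ^ (((((n:ℝ)+1 : ℝ)):ℂ) - 1) * ((1:ℂ) - x) ^ ((w:ℂ) - 1))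
      = ((∫ t in (0:ℝ)..1, t ^ n * (1 - t) ^ (w - 1) : ℝ) : ℂ) := by
    rw [← intervalIntegral.integral_ofReal]
    refine intervalIntegral.integral_congr fun x hx => ?_
    rw [uIcc_of_le (by norm_num : (0:ℝ) ≤ 1)] at hx
    have hx0 : (0:ℝ) ≤ x := hx.1
    have hx1 : (0:ℝ) ≤ 1 - x := by linarith [hx.2]
    have e1 : (((((n:ℝ)+1 : ℝ)):ℂ) - 1) = (n : ℂ) := by push_cast; ring
    have e2 : ((1:ℂ) - (x:ℂ)) = (((1 - x : ℝ)):ℂ) := by push_cast; ring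
    have e3 : ((w:ℂ) - 1) = (((w - 1 : ℝ)):ℂ) := by push_cast; ring
    rw [e1, e2, e3, Complex.cpow_natCast, ← Complex.ofReal_cpow hx1,
      ← Complex.ofReal_pow, ← Complex.ofReal_mul]
  rw [hint] at hc
  rw [show (((((n:ℝ)+1 : ℝ)):ℂ)) + (w : ℂ) = (((n:ℝ)+1+w : ℝ) : ℂ) by push_cast; ring] at hc
  rw [Complex.Gamma_ofReal, Complex.Gamma_ofReal, Complex.Gamma_ofReal] at hc
  exact_mod_cast hc

theorem aux_pos (n : ℕ) (w : ℝ) (hw : 0 < w) {a b : ℝ} (hab : a < b)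
    (ha : 0 ≤ a) (hb : b ≤ 1)
    (hi : IntervalIntegrable (fun t : ℝ => t ^ n * (1 - t) ^ (w - 1)) volume a b) :
    0 < ∫ t in a..b, t ^ n * (1 - t) ^ (w - 1) := by
  refine intervalIntegral.intervalIntegral_pos_of_pos_on hi (fun x hx => ?_) hab
  have hx0 : 0 < x := lt_of_le_of_lt ha hx.1
  have hx1 : 0 < 1 - x := by have := hx.2; have : x < 1 := lt_of_lt_of_le hx.2 hb; linarith
  positivity

theorem stmt_19 (r : ℕ) (hr : 1 ≤ r) (p : ℝ) (hp : p ∈ Set.Ioo (0:ℝ) 1) :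
    StrictMonoOn
      (fun w : ℝ =>
        (Real.Gamma ((r : ℝ) + w) / (Real.Gamma (r : ℝ) * Real.Gamma w)) *
          ∫ t in (0:ℝ)..p, t ^ (r - 1) * (1 - t) ^ (w - 1))
      (Set.Ioi (0:ℝ)) := by
  obtain ⟨hp0, hp1⟩ := hp
  set n := r - 1 with hn
  have hrn : (r : ℝ) = (n : ℝ) + 1 := by
    have : n + 1 = r := Nat.succ_pred_eq_of_pos hr
    exact_mod_cast (congrArg (fun k : ℕ => (k : ℝ)) this).symm
  intro w1 hw1 w2 hw2 h12
  simp only [Set.mem_Ioi] at hw1 hw2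
  -- integrability on subintervals
  have ii : ∀ w : ℝ, 0 < w → ∀ a b : ℝ, 0 ≤ a → a ≤ b → b ≤ 1 →
      IntervalIntegrable (fun t : ℝ => t ^ n * (1 - t) ^ (w - 1)) volume a b := by
    intro w hw a b ha hab hb
    refine (aux_ii n w hw).mono_set ?_
    rw [uIcc_of_le (by norm_num : (0:ℝ) ≤ 1)]
    exact uIcc_subset_Icc ⟨ha, hab.trans hb⟩ ⟨ha.trans hab, hb⟩
  set A : ℝ → ℝ := fun w => ∫ t in (0:ℝ)..p, t ^ n * (1 - t) ^ (w - 1) with hA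
  set B : ℝ → ℝ := fun w => ∫ t in p..(1:ℝ), t ^ n * (1 - t) ^ (w - 1) with hB
  have hApos : ∀ w : ℝ, 0 < w → 0 < A w := fun w hw =>
    aux_pos n w hw hp0 le_rfl hp1.le (ii w hw 0 p le_rfl hp0.le hp1.le)
  have hBpos : ∀ w : ℝ, 0 < w → 0 < B w := fun w hw =>
    aux_pos n w hw hp1 hp0.le le_rfl (ii w hw p 1 hp0.le hp1.le le_rfl)
  have hsplit : ∀ w : ℝ, 0 < w →
      (∫ t in (0:ℝ)..1, t ^ n * (1 - t) ^ (w - 1)) = A w + B w := fun w hw =>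
    (intervalIntegral.integral_add_adjacent_intervals
      (ii w hw 0 p le_rfl hp0.le hp1.le) (ii w hw p 1 hp0.le hp1.le le_rfl)).symm
  have hbeta : ∀ w : ℝ, 0 < w →
      Real.Gamma (r : ℝ) * Real.Gamma w = Real.Gamma ((r:ℝ) + w) * (A w + B w) := by
    intro w hw
    rw [hrn, ← hsplit w hw]
    exact aux_beta n w hw
  -- rewrite function values
  have hfun : ∀ w : ℝ, 0 < w →
      (Real.Gamma ((r : ℝ) + w) / (Real.Gamma (r : ℝ) * Real.Gamma w)) *
        (∫ t in (0:ℝ)..p, t ^ (r - 1) * (1 - t) ^ (w - 1)) = A w / (A w + B w) := by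
    intro w hw
    have hG : 0 < Real.Gamma ((r:ℝ) + w) :=
      Real.Gamma_pos_of_pos (by positivity)
    have hAB : 0 < A w + B w := by linarith [hApos w hw, hBpos w hw]
    rw [hbeta w hw]
    rw [div_mul_eq_div_div, div_self hG.ne', hA]
    ring
  show _ < _
  simp only [hn, hfun w1 hw1, hfun w2 hw2]
  -- key comparison
  set c : ℝ := (1 - p) ^ (w2 - w1) with hc
  have hcpos : 0 < c := Real.rpow_pos_of_pos (by linarith) _
  have key1 : c * A w1 < A w2 := by
    have hi2 := ii w2 hw2 0 p le_rfl hp0.le hp1.le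
    have hi1 := (ii w1 hw1 0 p le_rfl hp0.le hp1.le).const_mul c
    have hpos : 0 < ∫ t in (0:ℝ)..p,
        (t ^ n * (1 - t) ^ (w2 - 1) - c * (t ^ n * (1 - t) ^ (w1 - 1))) := by
      refine intervalIntegral.intervalIntegral_pos_of_pos_on (hi2.sub hi1)
        (fun x hx => ?_) hp0
      have hx0 : 0 < x := hx.1
      have hx1 : 0 < 1 - x := by linarith [hx.2]
      have he : (1 - x) ^ (w2 - 1) = (1 - x) ^ (w1 - 1) * (1 - x) ^ (w2 - w1) := by
        rw [← Real.rpow_add hx1]; ring_nf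
      have hlt : c < (1 - x) ^ (w2 - w1) :=
        Real.rpow_lt_rpow (by linarith) (by linarith [hx.2]) (by linarith)
      have hb : 0 < x ^ n * (1 - x) ^ (w1 - 1) := by positivity
      rw [he]
      nlinarith
    rw [intervalIntegral.integral_sub hi2 hi1, intervalIntegral.integral_const_mul] at hpos
    simp only [hA]
    linarith
  have key2 : B w2 < c * B w1 := by
    have hi2 := ii w2 hw2 p 1 hp0.le hp1.le le_rfl
    have hi1 := (ii w1 hw1 p 1 hp0.le hp1.le le_rfl).const_mul c
    have hpos : 0 < ∫ t in p..(1:ℝ),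
        (c * (t ^ n * (1 - t) ^ (w1 - 1)) - t ^ n * (1 - t) ^ (w2 - 1)) := by
      refine intervalIntegral.intervalIntegral_pos_of_pos_on (hi1.sub hi2)
        (fun x hx => ?_) hp1
      have hx0 : 0 < x := lt_trans hp0 hx.1
      have hx1 : 0 < 1 - x := by linarith [hx.2]
      have he : (1 - x) ^ (w2 - 1) = (1 - x) ^ (w1 - 1) * (1 - x) ^ (w2 - w1) := by
        rw [← Real.rpow_add hx1]; ring_nf
      have hlt : (1 - x) ^ (w2 - w1) < c :=
        Real.rpow_lt_rpow (by linarith) (by linarith [hx.1]) (by linarith)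
      have hb : 0 < x ^ n * (1 - x) ^ (w1 - 1) := by positivity
      rw [he]
      nlinarith
    rw [intervalIntegral.integral_sub hi1 hi2, intervalIntegral.integral_const_mul] at hpos
    simp only [hB]
    linarith
  have hA1 := hApos w1 hw1
  have hA2 := hApos w2 hw2
  have hB1 := hBpos w1 hw1
  have hB2 := hBpos w2 hw2
  rw [div_lt_div_iff₀ (by linarith) (by linarith)]
  nlinarith [mul_pos hA1 hB2, mul_pos hA2 hB1]
end
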